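/- Let U be a finite set with |U| = n, let t be an integer with 1 ≤ t ≤ n, and let 𝒮 be a family of subsets of U that contains every subset of U of size exactly t. Let k ≥ 0 and s ≥ 0 be integers, and suppose there exist sets S_1, …, S_s ∈ 𝒮 with |S_1 ∪ … ∪ S_s| ≥ s·t + t·k. Then there exist at most ⌈n/t⌉ − k sets in 𝒮 whose union is U. -/

import Mathlib

open Finset

lemma mem_foldr_union {α : Type*} [DecidableEq α] (L : List (Finset α)) (x : α) :
    x ∈ L.foldr (· ∪ ·) ∅ ↔ ∃ A ∈ L, x ∈ A := by
  induction L with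
  | nil => simp
  | cons a L ih => simp [ih]

lemma cover_aux {α : Type*} [DecidableEq α] (U : Finset α) (t : ℕ) (ht1 : 1 ≤ t)
    (htU : t ≤ U.card) :
    ∀ c (V : Finset α), V.card = c → V ⊆ U →
      ∃ L : List (Finset α), L.length = (c + t - 1) / t ∧
        (∀ A ∈ L, A ⊆ U ∧ A.card = t) ∧ V ⊆ L.foldr (· ∪ ·) ∅ := by
  intro c
  induction c using Nat.strong_induction_on with
  | _ c ih =>
    intro V hVc hVU
    rcases Nat.eq_zero_or_pos c with hc | hc
    · subst hc
      refine ⟨[], ?_, by simp, ?_⟩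
      · have : (0 + t - 1) / t = 0 := Nat.div_eq_of_lt (by omega)
        simpa using this.symm
      · rw [Finset.card_eq_zero] at hVc; simp [hVc]
    rcases le_or_gt c t with hct | hct
    · -- extend V to a set of size t
      obtain ⟨A, hVA, hAU, hA⟩ := Finset.exists_subsuperset_card_eq hVU
        (by omega) htU
      refine ⟨[A], ?_, by simp [hAU, hA], ?_⟩
      · simp only [List.length_cons, List.length_nil]
        rw [Nat.div_eq_of_lt_le (k := 1) (by omega) (by omega)]
      · exact fun x hx => (mem_foldr_union _ _).mpr ⟨A, by simp, hVA hx⟩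
    · -- take A ⊆ V of size t, recurse on V \ A
      obtain ⟨A, hAV, hA⟩ := Finset.exists_subset_card_eq (s := V) (n := t) (by omega)
      have hcard : (V \ A).card = c - t := by
        rw [Finset.card_sdiff_of_subset hAV, hVc, hA]
      obtain ⟨L, hL, hLm, hLc⟩ := ih (c - t) (by omega) (V \ A) hcard
        (fun x hx => hVU (Finset.mem_sdiff.mp hx).1)
      refine ⟨A :: L, ?_, ?_, ?_⟩
      · simp only [List.length_cons, hL]
        have h1 : c - t + t - 1 = c - 1 := by omega
        have h2 : c + t - 1 = (c - 1) + t := by omega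
        rw [h1, h2, Nat.add_div_right _ (by omega)]
      · intro B hB
        rcases List.mem_cons.mp hB with h | h
        · exact h ▸ ⟨hAV.trans hVU, hA⟩
        · exact hLm B h
      · intro x hx
        rw [List.foldr_cons, Finset.mem_union]
        by_cases hxA : x ∈ A
        · exact Or.inl hxA
        · exact Or.inr (hLc (Finset.mem_sdiff.mpr ⟨hx, hxA⟩))

theorem uniform_set_cover_below_guarantee {α : Type*} [DecidableEq α]
    (U : Finset α) (n : ℕ) (hn : U.card = n) (t : ℕ) (ht1 : 1 ≤ t)
    (htn : t ≤ n) (𝒮 : Set (Finset α))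
    (hsub : ∀ A ∈ 𝒮, A ⊆ U)
    (huniform : ∀ A : Finset α, A ⊆ U → A.card = t → A ∈ 𝒮)
    (k s : ℕ) (S : Fin s → Finset α) (hS : ∀ i, S i ∈ 𝒮)
    (hbig : s * t + t * k ≤ (Finset.univ.biUnion S).card) :
    ∃ (m : ℕ) (C : Fin m → Finset α), m ≤ (n + t - 1) / t - k ∧
      (∀ i, C i ∈ 𝒮) ∧ Finset.univ.biUnion C = U := by
  set W := Finset.univ.biUnion S with hW
  have hWU : W ⊆ U := by
    intro x hx
    obtain ⟨i, _, hxi⟩ := Finset.mem_biUnion.mp hx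
    exact hsub _ (hS i) hxi
  set V := U \ W with hV
  have hVcard : V.card = n - W.card := by
    rw [hV, Finset.card_sdiff_of_subset hWU, hn]
  obtain ⟨L, hLlen, hLm, hLc⟩ := cover_aux U t ht1 (hn ▸ htn) _ V hVcard
    (Finset.sdiff_subset)
  set L' := List.ofFn S ++ L with hL'
  refine ⟨L'.length, fun i => L'.get i, ?_, ?_, ?_⟩
  · have hWn : W.card ≤ n := hn ▸ Finset.card_le_card hWU
    have hlen : L'.length = s + (n - W.card + t - 1) / t := by
      simp [hL', hLlen]
    rw [hlen]
    have hr : (s + k) * t = s * t + t * k := by ring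
    have hr2 : t * (s + k) = s * t + t * k := by ring
    have h1 : n - W.card + t - 1 ≤ n + t - 1 - (s + k) * t := by omega
    have h2 : (n + t - 1 - (s + k) * t) / t = (n + t - 1) / t - (s + k) := by
      rw [Nat.mul_comm]
      exact Nat.sub_mul_div _ _ _
    have h3 : (n - W.card + t - 1) / t ≤ (n + t - 1) / t - (s + k) :=
      h2 ▸ Nat.div_le_div_right h1
    have h4 : s + k ≤ (n + t - 1) / t := by
      have : (s + k) * t ≤ n + t - 1 := by omega
      calc s + k = ((s + k) * t) / t := by rw [Nat.mul_div_cancel _ (by omega)]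
        _ ≤ (n + t - 1) / t := Nat.div_le_div_right this
    omega
  · intro i
    have : L'.get i ∈ L' := List.get_mem _ _
    rcases List.mem_append.mp this with h | h
    · obtain ⟨j, hj⟩ := List.mem_ofFn.mp h
      have := hS j
      rwa [hj] at this
    · exact huniform _ (hLm _ h).1 (hLm _ h).2
  · apply Finset.Subset.antisymm
    · intro x hx
      obtain ⟨i, _, hxi⟩ := Finset.mem_biUnion.mp hx
      have : L'.get i ∈ L' := List.get_mem _ _
      rcases List.mem_append.mp this with h | h
      · obtain ⟨j, hj⟩ := List.mem_ofFn.mp h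
        exact hsub _ (hS j) (hj ▸ hxi)
      · exact (hLm _ h).1 hxi
    · intro x hx
      have : x ∈ W ∨ x ∈ V := by
        by_cases h : x ∈ W
        · exact Or.inl h
        · exact Or.inr (Finset.mem_sdiff.mpr ⟨hx, h⟩)
      have hex : ∃ A ∈ L', x ∈ A := by
        rcases this with h | h
        · obtain ⟨i, _, hxi⟩ := Finset.mem_biUnion.mp h
          exact ⟨S i, List.mem_append.mpr (Or.inl (List.mem_ofFn.mpr ⟨i, rfl⟩)), hxi⟩
        · obtain ⟨A, hAL, hxA⟩ := (mem_foldr_union L x).mp (hLc h)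
          exact ⟨A, List.mem_append.mpr (Or.inr hAL), hxA⟩
      obtain ⟨A, hAL', hxA⟩ := hex
      obtain ⟨i, hi⟩ := List.mem_iff_get.mp hAL'
      exact Finset.mem_biUnion.mpr ⟨i, Finset.mem_univ _, hi ▸ hxA⟩
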